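/- Let A be Hermitian negative definite and B Hermitian positive semidefinite, both n×n. Then all eigenvalues of AB are real and satisfy λ_min(A)λ_min(B) ≤ λ_max(AB) ≤ λ_max(A)λ_min(B) and λ_min(A)λ_max(B) ≤ λ_min(AB) ≤ λ_max(A)λ_max(B). -/

import Mathlib

open Matrix

noncomputable section

/-- 3×3 block matrix with blocks of sizes n, m, l. -/
def blk3 {n m l : ℕ} (M11 : Matrix (Fin n) (Fin n) ℝ) (M12 : Matrix (Fin n) (Fin m) ℝ)
    (M13 : Matrix (Fin n) (Fin l) ℝ) (M21 : Matrix (Fin m) (Fin n) ℝ)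
    (M22 : Matrix (Fin m) (Fin m) ℝ) (M23 : Matrix (Fin m) (Fin l) ℝ)
    (M31 : Matrix (Fin l) (Fin n) ℝ) (M32 : Matrix (Fin l) (Fin m) ℝ)
    (M33 : Matrix (Fin l) (Fin l) ℝ) :
    Matrix (Fin n ⊕ (Fin m ⊕ Fin l)) (Fin n ⊕ (Fin m ⊕ Fin l)) ℝ :=
  fromBlocks M11 (fromCols M12 M13) (fromRows M21 M31) (fromBlocks M22 M23 M32 M33)

/-- μ ∈ ℂ is an eigenvalue of the real matrix M (viewed over ℂ). -/
def IsEig {k : Type*} [Fintype k] (M : Matrix k k ℝ) (μ : ℂ) : Prop :=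
  ∃ v : k → ℂ, v ≠ 0 ∧ (M.map (fun x : ℝ => (x : ℂ))) *ᵥ v = μ • v

section Aux
open scoped ComplexOrder

lemma dot_diag {n : ℕ} (d : Fin n → ℝ) (u : Fin n → ℂ) :
    star u ⬝ᵥ ((Matrix.diagonal (fun i => ((d i : ℝ) : ℂ))) *ᵥ u)
      = ((∑ i, d i * ‖u i‖ ^ 2 : ℝ) : ℂ) := by
  have hterm : ∀ i, star (u i) * (((d i : ℝ) : ℂ) * u i) = ((d i * ‖u i‖ ^ 2 : ℝ) : ℂ) := by
    intro i
    rw [RCLike.star_def, show (starRingEnd ℂ) (u i) * (((d i : ℝ) : ℂ) * u i)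
        = ((d i : ℝ) : ℂ) * ((starRingEnd ℂ) (u i) * u i) by ring, RCLike.conj_mul]
    push_cast
    norm_num
  simp only [dotProduct, mulVec_diagonal, Pi.star_apply, hterm]
  push_cast
  rfl

lemma herm_quad {n : ℕ} {H : Matrix (Fin n) (Fin n) ℂ} (hH : H.IsHermitian) (v : Fin n → ℂ) :
    ∃ w : Fin n → ℝ, (∀ i, 0 ≤ w i) ∧
      star v ⬝ᵥ v = ((∑ i, w i : ℝ) : ℂ) ∧
      star v ⬝ᵥ (H *ᵥ v) = ((∑ i, hH.eigenvalues i * w i : ℝ) : ℂ) ∧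
      ((∀ i, hH.eigenvalues i ≠ 0) →
        star v ⬝ᵥ (H⁻¹ *ᵥ v) = ((∑ i, (hH.eigenvalues i)⁻¹ * w i : ℝ) : ℂ)) := by
  set U : Matrix (Fin n) (Fin n) ℂ := (hH.eigenvectorUnitary : Matrix (Fin n) (Fin n) ℂ) with hUdef
  have hUmem : U ∈ Matrix.unitaryGroup (Fin n) ℂ := hH.eigenvectorUnitary.2
  have hUU : U * star U = 1 := (Matrix.mem_unitaryGroup_iff).mp hUmem
  set u : Fin n → ℂ := star U *ᵥ v with hu
  have key : ∀ d : Fin n → ℝ,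
      star v ⬝ᵥ ((U * Matrix.diagonal (fun i => ((d i : ℝ) : ℂ)) * star U) *ᵥ v)
        = ((∑ i, d i * ‖u i‖ ^ 2 : ℝ) : ℂ) := by
    intro d
    rw [← dot_diag d u]
    have h1 : (U * Matrix.diagonal (fun i => ((d i : ℝ) : ℂ)) * star U) *ᵥ v
        = U *ᵥ (Matrix.diagonal (fun i => ((d i : ℝ) : ℂ)) *ᵥ u) := by
      rw [hu, mulVec_mulVec, mulVec_mulVec, mul_assoc]
    rw [h1, dotProduct_mulVec]
    congr 1
    rw [hu, star_mulVec, Matrix.star_eq_conjTranspose, conjTranspose_conjTranspose]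
  refine ⟨fun i => ‖u i‖ ^ 2, fun i => by positivity, ?_, ?_, ?_⟩
  · have h := key (fun _ => 1)
    simp only [Complex.ofReal_one] at h
    rw [Matrix.diagonal_one, mul_one, hUU, one_mulVec] at h
    rw [h]
    norm_num
  · have h := key hH.eigenvalues
    have hst : H = U * Matrix.diagonal (fun i => ((hH.eigenvalues i : ℝ) : ℂ)) * star U := by
      exact hH.spectral_theorem
    rw [← hst] at h
    exact h
  · intro hne
    have h := key (fun i => (hH.eigenvalues i)⁻¹)
    have hst : H = U * Matrix.diagonal (fun i => ((hH.eigenvalues i : ℝ) : ℂ)) * star U := by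
      exact hH.spectral_theorem
    have hinv : H⁻¹ = U * Matrix.diagonal (fun i => (((hH.eigenvalues i)⁻¹ : ℝ) : ℂ)) * star U := by
      apply Matrix.inv_eq_right_inv
      have hmid : (star U : Matrix (Fin n) (Fin n) ℂ) *
          (U * Matrix.diagonal (fun i => (((hH.eigenvalues i)⁻¹ : ℝ) : ℂ)) * star U)
          = Matrix.diagonal (fun i => (((hH.eigenvalues i)⁻¹ : ℝ) : ℂ)) * star U := by
        rw [← mul_assoc, ← mul_assoc, (Matrix.mem_unitaryGroup_iff').mp hUmem, one_mul]
      have h2 : (U * Matrix.diagonal (fun i => ((hH.eigenvalues i : ℝ) : ℂ)) * star U) *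
          (U * Matrix.diagonal (fun i => (((hH.eigenvalues i)⁻¹ : ℝ) : ℂ)) * star U) = 1 := by
        calc (U * Matrix.diagonal (fun i => ((hH.eigenvalues i : ℝ) : ℂ)) * star U) *
            (U * Matrix.diagonal (fun i => (((hH.eigenvalues i)⁻¹ : ℝ) : ℂ)) * star U)
            = U * (Matrix.diagonal (fun i => ((hH.eigenvalues i : ℝ) : ℂ)) *
              (Matrix.diagonal (fun i => (((hH.eigenvalues i)⁻¹ : ℝ) : ℂ)) * star U)) := by
              rw [mul_assoc, mul_assoc, hmid]
          _ = 1 := by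
              rw [← mul_assoc (Matrix.diagonal _), Matrix.diagonal_mul_diagonal]
              have hd : (fun i => ((hH.eigenvalues i : ℝ) : ℂ) * (((hH.eigenvalues i)⁻¹ : ℝ) : ℂ))
                  = fun _ => (1 : ℂ) := by
                funext i
                push_cast
                exact mul_inv_cancel₀ (by exact_mod_cast hne i)
              rw [hd, Matrix.diagonal_one, one_mul, hUU]
      exact (congrArg (· * (U * Matrix.diagonal (fun i => (((hH.eigenvalues i)⁻¹ : ℝ) : ℂ)) * star U)) hst).trans h2
    rw [hinv]
    exact h

lemma dot_self' {n : ℕ} (v : Fin n → ℂ) : star v ⬝ᵥ v = ((∑ i, ‖v i‖ ^ 2 : ℝ) : ℂ) := by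
  simp only [dotProduct, Pi.star_apply, RCLike.star_def, RCLike.conj_mul]
  push_cast
  rfl

lemma normsum_pos {n : ℕ} {v : Fin n → ℂ} (hv : v ≠ 0) : 0 < ∑ i, ‖v i‖ ^ 2 := by
  rcases Function.ne_iff.mp hv with ⟨i, hi⟩
  refine Finset.sum_pos' (fun j _ => by positivity) ⟨i, Finset.mem_univ i, ?_⟩
  have h0 : 0 < ‖v i‖ := norm_pos_iff.mpr hi
  positivity

lemma inv_sum_bounds {n : ℕ} (a w : Fin n → ℝ) (ha : ∀ i, a i < 0) (hw : ∀ i, 0 ≤ w i)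
    (amin amax : ℝ) (hmin : ∀ i, amin ≤ a i) (hmax : ∀ i, a i ≤ amax) :
    amax * (∑ i, (a i)⁻¹ * w i) ≤ ∑ i, w i ∧ ∑ i, w i ≤ amin * (∑ i, (a i)⁻¹ * w i) := by
  constructor
  · rw [Finset.mul_sum]
    apply Finset.sum_le_sum
    intro i _
    have h1 : (a i)⁻¹ < 0 := inv_lt_zero.mpr (ha i)
    have h2 : a i * (a i)⁻¹ = 1 := mul_inv_cancel₀ (ha i).ne
    have h3 : amax * (a i)⁻¹ ≤ a i * (a i)⁻¹ := mul_le_mul_of_nonpos_right (hmax i) h1.le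
    nlinarith [hw i]
  · rw [Finset.mul_sum]
    apply Finset.sum_le_sum
    intro i _
    have h1 : (a i)⁻¹ < 0 := inv_lt_zero.mpr (ha i)
    have h2 : a i * (a i)⁻¹ = 1 := mul_inv_cancel₀ (ha i).ne
    have h3 : a i * (a i)⁻¹ ≤ amin * (a i)⁻¹ := mul_le_mul_of_nonpos_right (hmin i) h1.le
    nlinarith [hw i]

-- eigenvalues of A are negative
lemma eigen_neg {n : ℕ} {A : Matrix (Fin n) (Fin n) ℂ} (hA : A.IsHermitian)
    (hAneg : (-A).PosDef) (i : Fin n) : hA.eigenvalues i < 0 := by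
  set v : Fin n → ℂ := ⇑(hA.eigenvectorBasis i) with hv
  have hvne : v ≠ 0 := by simpa [hv] using hA.eigenvectorBasis.orthonormal.ne_zero i
  have hev : A *ᵥ v = hA.eigenvalues i • v := hA.mulVec_eigenvectorBasis i
  have hpos : 0 < star v ⬝ᵥ ((-A) *ᵥ v) := hAneg.dotProduct_mulVec_pos hvne
  have hcomp : star v ⬝ᵥ ((-A) *ᵥ v)
      = ((-(hA.eigenvalues i) * (∑ j, ‖v j‖ ^ 2) : ℝ) : ℂ) := by
    rw [neg_mulVec, hev]
    rw [show -(hA.eigenvalues i • v) = (-(hA.eigenvalues i)) • v by rw [neg_smul]]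
    rw [dotProduct_smul]
    have hds : star v ⬝ᵥ v = ((∑ j, ‖v j‖ ^ 2 : ℝ) : ℂ) := by
      simp only [dotProduct, Pi.star_apply, RCLike.star_def, RCLike.conj_mul]
      push_cast
      rfl
    rw [hds]
    rw [Complex.real_smul]
    norm_cast
  rw [hcomp] at hpos
  rw [Complex.zero_lt_real] at hpos
  have hN : 0 < ∑ j, ‖v j‖ ^ 2 := normsum_pos hvne
  nlinarith

lemma ptwise {n : ℕ} (A B : Matrix (Fin n) (Fin n) ℂ)
    (hA : A.IsHermitian) (hAneg : (-A).PosDef) (hB : B.PosSemidef)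
    (μ : ℂ) (v : Fin n → ℂ) (hv : v ≠ 0) (hev : (A * B) *ᵥ v = μ • v) :
    μ.im = 0 ∧ (⨅ i, hA.eigenvalues i) * (⨆ i, hB.1.eigenvalues i) ≤ μ.re ∧
      μ.re ≤ (⨆ i, hA.eigenvalues i) * (⨅ i, hB.1.eigenvalues i) := by
  classical
  haveI hne : Nonempty (Fin n) := ⟨(Function.ne_iff.mp hv).choose⟩
  set a := hA.eigenvalues with ha_def
  set b := hB.1.eigenvalues with hb_def
  have haneg : ∀ i, a i < 0 := eigen_neg hA hAneg
  have hbnn : ∀ i, 0 ≤ b i := fun i => hB.eigenvalues_nonneg i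
  have hAdet : IsUnit A.det := by
    have h1 : IsUnit (-A) := hAneg.isUnit
    have h2 : IsUnit A := by simpa using h1.neg
    exact (Matrix.isUnit_iff_isUnit_det _).mp h2
  have hBv : B *ᵥ v = μ • (A⁻¹ *ᵥ v) := by
    have h1 : A⁻¹ *ᵥ ((A * B) *ᵥ v) = B *ᵥ v := by
      rw [mulVec_mulVec, ← Matrix.mul_assoc, Matrix.nonsing_inv_mul _ hAdet, Matrix.one_mul]
    rw [hev] at h1
    rw [← h1, mulVec_smul]
  obtain ⟨wB, hwB0, hNB, hpB, -⟩ := herm_quad hB.1 v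
  obtain ⟨wA, hwA0, hNA, -, hqA⟩ := herm_quad hA v
  have hq := hqA (fun i => (haneg i).ne)
  have hNeq : ∑ i, wA i = ∑ i, wB i := by
    have h := hNA.symm.trans hNB
    exact_mod_cast h
  set N := ∑ i, wB i with hN_def
  set qr := ∑ i, (a i)⁻¹ * wA i with hqr_def
  set pr := ∑ i, b i * wB i with hpr_def
  have hNpos : 0 < N := by
    have h1 : star v ⬝ᵥ v ≠ 0 := fun h => hv (dotProduct_star_self_eq_zero.mp h)
    have h2 : (N : ℂ) ≠ 0 := by rw [← hNB]; exact h1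
    have h3 : N ≠ 0 := by exact_mod_cast h2
    have h4 : 0 ≤ N := Finset.sum_nonneg fun i _ => hwB0 i
    exact lt_of_le_of_ne h4 (Ne.symm h3)
  have hpq : ((pr : ℝ) : ℂ) = μ * ((qr : ℝ) : ℂ) := by
    calc ((pr : ℝ) : ℂ) = star v ⬝ᵥ (B *ᵥ v) := hpB.symm
      _ = star v ⬝ᵥ (μ • (A⁻¹ *ᵥ v)) := by rw [hBv]
      _ = μ * (star v ⬝ᵥ (A⁻¹ *ᵥ v)) := by rw [dotProduct_smul, smul_eq_mul]
      _ = μ * ((qr : ℝ) : ℂ) := by rw [hq]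
  set amin := ⨅ j, a j with hamin_def
  set amax := ⨆ j, a j with hamax_def
  set bmin := ⨅ j, b j with hbmin_def
  set bmax := ⨆ j, b j with hbmax_def
  have hamin : ∀ i, amin ≤ a i := fun i => ciInf_le (Set.finite_range a).bddBelow i
  have hamax : ∀ i, a i ≤ amax := fun i => le_ciSup (Set.finite_range a).bddAbove i
  have hbmin : ∀ i, bmin ≤ b i := fun i => ciInf_le (Set.finite_range b).bddBelow i
  have hbmax : ∀ i, b i ≤ bmax := fun i => le_ciSup (Set.finite_range b).bddAbove i
  have hamax0 : amax < 0 := by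
    obtain ⟨j, -, hj⟩ := Finset.exists_max_image Finset.univ a ⟨Classical.arbitrary _, Finset.mem_univ _⟩
    have h1 : amax ≤ a j := ciSup_le (fun i => hj i (Finset.mem_univ i))
    exact lt_of_le_of_lt h1 (haneg j)
  have haminneg : amin < 0 := lt_of_le_of_lt (hamin (Classical.arbitrary _)) (haneg _)
  have hbmin0 : 0 ≤ bmin := le_ciInf hbnn
  have hbmax0 : 0 ≤ bmax := le_trans (hbnn (Classical.arbitrary _)) (hbmax _)
  obtain ⟨hq1, hq2⟩ := inv_sum_bounds a wA haneg hwA0 amin amax hamin hamax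
  rw [hNeq] at hq1 hq2
  have hqneg : qr < 0 := by nlinarith
  have him : μ.im = 0 := by
    have h := congrArg Complex.im hpq
    simp only [Complex.ofReal_im, Complex.mul_im, Complex.ofReal_re] at h
    have h2 : μ.im * qr = 0 := by linarith [h]
    exact (mul_eq_zero.mp h2).resolve_right hqneg.ne
  have hre : μ.re * qr = pr := by
    have h := congrArg Complex.re hpq
    simp only [Complex.ofReal_re, Complex.mul_re, Complex.ofReal_im] at h
    linarith [h]
  have hpr1 : bmin * N ≤ pr := by
    rw [hpr_def, hN_def, Finset.mul_sum]
    exact Finset.sum_le_sum fun i _ => mul_le_mul_of_nonneg_right (hbmin i) (hwB0 i)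
  have hpr2 : pr ≤ bmax * N := by
    rw [hpr_def, hN_def, Finset.mul_sum]
    exact Finset.sum_le_sum fun i _ => mul_le_mul_of_nonneg_right (hbmax i) (hwB0 i)
  refine ⟨him, ?_, ?_⟩
  · have h5 : pr ≤ bmax * (amin * qr) := le_trans hpr2 (mul_le_mul_of_nonneg_left hq2 hbmax0)
    nlinarith
  · have h5 : bmin * (amax * qr) ≤ pr := le_trans (mul_le_mul_of_nonneg_left hq1 hbmin0) hpr1
    nlinarith

lemma extremes {n : ℕ} (A B : Matrix (Fin n) (Fin n) ℂ)
    (hA : A.IsHermitian) (hAneg : (-A).PosDef) (hB : B.PosSemidef)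
    (hn : Nonempty (Fin n)) :
    ∃ t1 t2 : ℝ,
      (∃ v : Fin n → ℂ, v ≠ 0 ∧ (A * B) *ᵥ v = (t1 : ℂ) • v) ∧
      (∃ v : Fin n → ℂ, v ≠ 0 ∧ (A * B) *ᵥ v = (t2 : ℂ) • v) ∧
      (⨅ i, hA.eigenvalues i) * (⨅ i, hB.1.eigenvalues i) ≤ t1 ∧
      t2 ≤ (⨆ i, hA.eigenvalues i) * (⨆ i, hB.1.eigenvalues i) := by
  classical
  set a := hA.eigenvalues with ha_def
  set b := hB.1.eigenvalues with hb_def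
  have haneg : ∀ i, a i < 0 := eigen_neg hA hAneg
  have hbnn : ∀ i, 0 ≤ b i := fun i => hB.eigenvalues_nonneg i
  have hAdet : IsUnit A.det := by
    have h1 : IsUnit (-A) := hAneg.isUnit
    have h2 : IsUnit A := by simpa using h1.neg
    exact (Matrix.isUnit_iff_isUnit_det _).mp h2
  set S := (open scoped MatrixOrder in CFC.sqrt (-A)) with hS_def
  have hS : S.PosSemidef := open scoped MatrixOrder in (CFC.sqrt_nonneg (-A)).posSemidef
  have hSS : S * S = -A := open scoped MatrixOrder in CFC.sqrt_mul_sqrt_self (-A) hAneg.posSemidef.nonneg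
  have hSH : Sᴴ = S := hS.1
  have hSdet : IsUnit S.det := by
    have h1 : IsUnit ((-A).det) := (Matrix.isUnit_iff_isUnit_det _).mp hAneg.isUnit
    have h2 : S.det * S.det = (-A).det := by rw [← Matrix.det_mul, hSS]
    exact isUnit_of_mul_isUnit_left (h2.symm ▸ h1)
  have hSinv : S⁻¹ * S = 1 := Matrix.nonsing_inv_mul _ hSdet
  have hSinv' : S * S⁻¹ = 1 := Matrix.mul_nonsing_inv _ hSdet
  have hSinvH : S⁻¹ᴴ = S⁻¹ := by rw [Matrix.conjTranspose_nonsing_inv, hSH]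
  set M := S * B * S with hM_def
  have hM : M.PosSemidef := by
    have h := hB.mul_mul_conjTranspose_same S
    rwa [hSH] at h
  set m := hM.1.eigenvalues with hm_def
  have hmem : ∀ j : Fin n, ∃ v : Fin n → ℂ, v ≠ 0 ∧
      (A * B) *ᵥ v = ((-(m j) : ℝ) : ℂ) • v := by
    intro j
    set e : Fin n → ℂ := ⇑(hM.1.eigenvectorBasis j) with he_def
    have hene : e ≠ 0 := by simpa [he_def] using hM.1.eigenvectorBasis.orthonormal.ne_zero j
    have hev : M *ᵥ e = m j • e := hM.1.mulVec_eigenvectorBasis j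
    refine ⟨S *ᵥ e, ?_, ?_⟩
    · intro h0
      apply hene
      have h1 : S⁻¹ *ᵥ (S *ᵥ e) = e := by rw [mulVec_mulVec, hSinv, one_mulVec]
      rw [h0, mulVec_zero] at h1
      exact h1.symm
    · have hA' : A = -(S * S) := by rw [hSS, neg_neg]
      have hABS : A * B * S = -(S * M) := by
        rw [hM_def, hA']
        simp only [Matrix.neg_mul, Matrix.mul_assoc]
      calc (A * B) *ᵥ (S *ᵥ e) = (A * B * S) *ᵥ e := by rw [mulVec_mulVec]
        _ = -((S * M) *ᵥ e) := by rw [hABS, neg_mulVec]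
        _ = -(S *ᵥ (M *ᵥ e)) := by rw [mulVec_mulVec]
        _ = -(S *ᵥ (m j • e)) := by rw [hev]
        _ = (-(m j)) • (S *ᵥ e) := by rw [mulVec_smul, neg_smul]
        _ = ((-(m j) : ℝ) : ℂ) • (S *ᵥ e) := by
              funext i
              simp [Complex.real_smul]
  have hquad : ∀ k : Fin n, ∃ (wM wA : Fin n → ℝ) (Ny : ℝ),
      (∀ i, 0 ≤ wM i) ∧ 0 < Ny ∧
      (∑ i, wM i) = -(∑ i, (a i)⁻¹ * wA i) ∧
      (∑ i, m i * wM i) = b k * Ny ∧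
      (∀ i, 0 ≤ wA i) ∧ (∑ i, wA i) = Ny := by
    intro k
    set y : Fin n → ℂ := ⇑(hB.1.eigenvectorBasis k) with hy_def
    have hyne : y ≠ 0 := by simpa [hy_def] using hB.1.eigenvectorBasis.orthonormal.ne_zero k
    have hyev : B *ᵥ y = b k • y := hB.1.mulVec_eigenvectorBasis k
    set u : Fin n → ℂ := S⁻¹ *ᵥ y with hu_def
    have hSu : S *ᵥ u = y := by rw [hu_def, mulVec_mulVec, hSinv', one_mulVec]
    have hune : u ≠ 0 := by
      intro h0
      apply hyne
      rw [← hSu, h0, mulVec_zero]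
    have hstaru : star u = star y ᵥ* S⁻¹ := by rw [hu_def, star_mulVec, hSinvH]
    obtain ⟨wM, hwM0, hNM, hpM, -⟩ := herm_quad hM.1 u
    obtain ⟨wA, hwA0, hNA, -, hqA⟩ := herm_quad hA y
    have hq := hqA (fun i => (haneg i).ne)
    have hid1 : star u ⬝ᵥ (M *ᵥ u) = ((b k : ℝ) : ℂ) * (star y ⬝ᵥ y) := by
      have h1 : M *ᵥ u = b k • (S *ᵥ y) := by
        calc M *ᵥ u = S *ᵥ (B *ᵥ (S *ᵥ u)) := by
              rw [hM_def, ← mulVec_mulVec, ← mulVec_mulVec]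
          _ = S *ᵥ (b k • y) := by rw [hSu, hyev]
          _ = b k • (S *ᵥ y) := by rw [mulVec_smul]
      rw [h1, dotProduct_smul]
      have h2 : star u ⬝ᵥ (S *ᵥ y) = star y ⬝ᵥ y := by
        rw [hstaru, dotProduct_mulVec, vecMul_vecMul, hSinv, vecMul_one]
      rw [h2, Complex.real_smul]
    have hAinvneg : (-A)⁻¹ = -(A⁻¹) := by
      apply Matrix.inv_eq_right_inv
      rw [neg_mul_neg, Matrix.mul_nonsing_inv _ hAdet]
    have hid2 : star u ⬝ᵥ u = -(star y ⬝ᵥ (A⁻¹ *ᵥ y)) := by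
      have h1 : S⁻¹ * S⁻¹ = -(A⁻¹) := by rw [← hAinvneg, ← hSS, Matrix.mul_inv_rev]
      calc star u ⬝ᵥ u = (star y ᵥ* S⁻¹) ⬝ᵥ (S⁻¹ *ᵥ y) := by rw [hstaru, hu_def]
        _ = ((star y ᵥ* S⁻¹) ᵥ* S⁻¹) ⬝ᵥ y := by rw [dotProduct_mulVec]
        _ = (star y ᵥ* (S⁻¹ * S⁻¹)) ⬝ᵥ y := by rw [vecMul_vecMul]
        _ = (star y ᵥ* (-(A⁻¹))) ⬝ᵥ y := by rw [h1]
        _ = -((star y ᵥ* A⁻¹) ⬝ᵥ y) := by rw [Matrix.vecMul_neg, neg_dotProduct]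
        _ = -(star y ⬝ᵥ (A⁻¹ *ᵥ y)) := by rw [dotProduct_mulVec]
    refine ⟨wM, wA, ∑ i, wA i, hwM0, ?_, ?_, ?_, hwA0, rfl⟩
    · -- 0 < ∑ wA
      have h1 : star y ⬝ᵥ y ≠ 0 := fun h => hyne (dotProduct_star_self_eq_zero.mp h)
      have h2 : ((∑ i, wA i : ℝ) : ℂ) ≠ 0 := by rw [← hNA]; exact h1
      have h3 : (∑ i, wA i) ≠ 0 := by exact_mod_cast h2
      exact lt_of_le_of_ne (Finset.sum_nonneg fun i _ => hwA0 i) (Ne.symm h3)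
    · -- ∑ wM = -(∑ (a i)⁻¹ wA i)
      have h1 : ((∑ i, wM i : ℝ) : ℂ) = -(((∑ i, (a i)⁻¹ * wA i : ℝ)) : ℂ) := by
        rw [← hNM, hid2, hq]
      exact_mod_cast h1
    · -- ∑ m i wM i = b k * ∑ wA
      have h1 : ((∑ i, m i * wM i : ℝ) : ℂ) = ((b k * (∑ i, wA i) : ℝ) : ℂ) := by
        rw [← hpM, hid1, hNA]
        push_cast
        ring
      exact_mod_cast h1
  -- argmin / argmax
  obtain ⟨j0, -, hj0⟩ := Finset.exists_min_image Finset.univ m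
    ⟨Classical.arbitrary _, Finset.mem_univ _⟩
  obtain ⟨j1, -, hj1⟩ := Finset.exists_max_image Finset.univ m
    ⟨Classical.arbitrary _, Finset.mem_univ _⟩
  obtain ⟨k0, -, hk0⟩ := Finset.exists_min_image Finset.univ b
    ⟨Classical.arbitrary _, Finset.mem_univ _⟩
  obtain ⟨k1, -, hk1⟩ := Finset.exists_max_image Finset.univ b
    ⟨Classical.arbitrary _, Finset.mem_univ _⟩
  have hamin : ∀ i, (⨅ j, a j) ≤ a i := fun i => ciInf_le (Set.finite_range a).bddBelow i
  have hamax : ∀ i, a i ≤ (⨆ j, a j) := fun i => le_ciSup (Set.finite_range a).bddAbove i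
  have haminneg : (⨅ j, a j) < 0 := lt_of_le_of_lt (hamin (Classical.arbitrary _)) (haneg _)
  have hamaxneg : (⨆ j, a j) < 0 := by
    obtain ⟨ja, -, hja⟩ := Finset.exists_max_image Finset.univ a
      ⟨Classical.arbitrary _, Finset.mem_univ _⟩
    exact lt_of_le_of_lt (ciSup_le fun i => hja i (Finset.mem_univ i)) (haneg ja)
  refine ⟨-(m j0), -(m j1), hmem j0, hmem j1, ?_, ?_⟩
  · obtain ⟨wM, wA, Ny, hwM0, hNy, hNMe, hpMe, hwA0, hNAe⟩ := hquad k0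
    have hbk0 : (⨅ i, b i) = b k0 :=
      le_antisymm (ciInf_le (Set.finite_range b).bddBelow k0)
        (le_ciInf fun i => hk0 i (Finset.mem_univ i))
    obtain ⟨hq1, hq2⟩ := inv_sum_bounds a wA haneg hwA0 (⨅ j, a j) (⨆ j, a j) hamin hamax
    rw [hNAe] at hq1 hq2
    set qr := ∑ i, (a i)⁻¹ * wA i with hqr_def
    have hqneg : qr < 0 := by nlinarith
    have hray : m j0 * (∑ i, wM i) ≤ ∑ i, m i * wM i := by
      rw [Finset.mul_sum]
      exact Finset.sum_le_sum fun i _ => mul_le_mul_of_nonneg_right (hj0 i (Finset.mem_univ i)) (hwM0 i)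
    have h5 : b k0 * Ny ≤ b k0 * ((⨅ j, a j) * qr) :=
      mul_le_mul_of_nonneg_left hq2 (hbnn k0)
    have h6 : m j0 * (-qr) ≤ b k0 * ((⨅ j, a j) * qr) := by
      calc m j0 * (-qr) = m j0 * (∑ i, wM i) := by rw [hNMe]
        _ ≤ ∑ i, m i * wM i := hray
        _ = b k0 * Ny := hpMe
        _ ≤ b k0 * ((⨅ j, a j) * qr) := h5
    rw [hbk0]
    nlinarith [h6, hqneg]
  · obtain ⟨wM, wA, Ny, hwM0, hNy, hNMe, hpMe, hwA0, hNAe⟩ := hquad k1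
    have hbk1 : (⨆ i, b i) = b k1 :=
      le_antisymm (ciSup_le fun i => hk1 i (Finset.mem_univ i))
        (le_ciSup (Set.finite_range b).bddAbove k1)
    obtain ⟨hq1, hq2⟩ := inv_sum_bounds a wA haneg hwA0 (⨅ j, a j) (⨆ j, a j) hamin hamax
    rw [hNAe] at hq1 hq2
    set qr := ∑ i, (a i)⁻¹ * wA i with hqr_def
    have hqneg : qr < 0 := by nlinarith
    have hray : ∑ i, m i * wM i ≤ m j1 * (∑ i, wM i) := by
      rw [Finset.mul_sum]
      exact Finset.sum_le_sum fun i _ => mul_le_mul_of_nonneg_right (hj1 i (Finset.mem_univ i)) (hwM0 i)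
    have h5 : b k1 * ((⨆ j, a j) * qr) ≤ b k1 * Ny :=
      mul_le_mul_of_nonneg_left hq1 (hbnn k1)
    have h6 : b k1 * ((⨆ j, a j) * qr) ≤ m j1 * (-qr) := by
      calc b k1 * ((⨆ j, a j) * qr) ≤ b k1 * Ny := h5
        _ = ∑ i, m i * wM i := hpMe.symm
        _ ≤ m j1 * (∑ i, wM i) := hray
        _ = m j1 * (-qr) := by rw [hNMe]
    rw [hbk1]
    nlinarith [h6, hqneg]

end Aux

open scoped ComplexOrder in
theorem stmt10 {n : ℕ} (A B : Matrix (Fin n) (Fin n) ℂ)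
    (hA : A.IsHermitian) (hAneg : (-A).PosDef) (hB : B.PosSemidef) :
    (∀ μ : ℂ, (∃ v : Fin n → ℂ, v ≠ 0 ∧ (A * B) *ᵥ v = μ • v) → μ.im = 0) ∧
    ((⨅ i, hA.eigenvalues i) * (⨅ i, hB.1.eigenvalues i) ≤
        sSup {t : ℝ | ∃ v : Fin n → ℂ, v ≠ 0 ∧ (A * B) *ᵥ v = (t : ℂ) • v} ∧
      sSup {t : ℝ | ∃ v : Fin n → ℂ, v ≠ 0 ∧ (A * B) *ᵥ v = (t : ℂ) • v} ≤
        (⨆ i, hA.eigenvalues i) * (⨅ i, hB.1.eigenvalues i)) ∧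
    ((⨅ i, hA.eigenvalues i) * (⨆ i, hB.1.eigenvalues i) ≤
        sInf {t : ℝ | ∃ v : Fin n → ℂ, v ≠ 0 ∧ (A * B) *ᵥ v = (t : ℂ) • v} ∧
      sInf {t : ℝ | ∃ v : Fin n → ℂ, v ≠ 0 ∧ (A * B) *ᵥ v = (t : ℂ) • v} ≤
        (⨆ i, hA.eigenvalues i) * (⨆ i, hB.1.eigenvalues i)) := by
  classical
  have part1 : ∀ μ : ℂ, (∃ v : Fin n → ℂ, v ≠ 0 ∧ (A * B) *ᵥ v = μ • v) → μ.im = 0 := by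
    rintro μ ⟨v, hv, hev⟩
    exact (ptwise A B hA hAneg hB μ v hv hev).1
  rcases isEmpty_or_nonempty (Fin n) with hE | hne
  · have hset : {t : ℝ | ∃ v : Fin n → ℂ, v ≠ 0 ∧ (A * B) *ᵥ v = (t : ℂ) • v} = ∅ := by
      ext t
      simp only [Set.mem_setOf_eq, Set.mem_empty_iff_false, iff_false, not_exists]
      rintro v ⟨hv, -⟩
      exact hv (funext fun i => (hE.false i).elim)
    refine ⟨part1, ?_, ?_⟩ <;>
      rw [hset] <;>
      simp [Real.sSup_empty, Real.sInf_empty, Real.iSup_of_isEmpty, Real.iInf_of_isEmpty]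
  · obtain ⟨t1, t2, ht1mem, ht2mem, ht1, ht2⟩ := extremes A B hA hAneg hB hne
    have hub : ∀ t ∈ {t : ℝ | ∃ v : Fin n → ℂ, v ≠ 0 ∧ (A * B) *ᵥ v = (t : ℂ) • v},
        t ≤ (⨆ i, hA.eigenvalues i) * (⨅ i, hB.1.eigenvalues i) := by
      rintro t ⟨v, hv, hev⟩
      have h := (ptwise A B hA hAneg hB (t : ℂ) v hv hev).2.2
      simpa using h
    have hlb : ∀ t ∈ {t : ℝ | ∃ v : Fin n → ℂ, v ≠ 0 ∧ (A * B) *ᵥ v = (t : ℂ) • v},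
        (⨅ i, hA.eigenvalues i) * (⨆ i, hB.1.eigenvalues i) ≤ t := by
      rintro t ⟨v, hv, hev⟩
      have h := (ptwise A B hA hAneg hB (t : ℂ) v hv hev).2.1
      simpa using h
    have hbdda : BddAbove {t : ℝ | ∃ v : Fin n → ℂ, v ≠ 0 ∧ (A * B) *ᵥ v = (t : ℂ) • v} :=
      ⟨_, fun t ht => hub t ht⟩
    have hbddb : BddBelow {t : ℝ | ∃ v : Fin n → ℂ, v ≠ 0 ∧ (A * B) *ᵥ v = (t : ℂ) • v} :=
      ⟨_, fun t ht => hlb t ht⟩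
    refine ⟨part1, ⟨?_, ?_⟩, ?_, ?_⟩
    · exact le_trans ht1 (le_csSup hbdda ht1mem)
    · exact csSup_le ⟨t1, ht1mem⟩ hub
    · exact le_csInf ⟨t2, ht2mem⟩ hlb
    · exact le_trans (csInf_le hbddb ht2mem) ht2
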